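/- Let F be the free Lie ring over ℤ on generators X_1, …, X_m, let e_1, …, e_m be nonnegative integers with e_i dividing e_{i+1} for 1 ≤ i ≤ m−1, let F' = [F,F], let S be the Lie ideal F' + T of F, where T is the Lie ideal of F generated by {e_i·X_i : 1 ≤ i ≤ m}, let 𝔰 be the two-sided ideal of U(F) generated by ι(S), and let M = {x ∈ F : ι(x) ∈ ϖ(F)·𝔰}. Then for all n ≥ 1, the set {x ∈ F : ι(x) ∈ ϖ(F)^n + ϖ(F)·𝔰} equals γ_n(F) + M, where γ_n(F) is the n-th term of the lower central series of F. -/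

import Mathlib

open UniversalEnvelopingAlgebra LieModule

attribute [local instance 100] LieRing.ofAssociativeRing

/-- The two-sided ideal (as a ℤ-submodule) of a ring `U` generated by a set `s`. -/
def twoSidedSpan (U : Type*) [Ring U] (s : Set U) : Submodule ℤ U :=
  ⊤ * Submodule.span ℤ s * ⊤

/-- The augmentation ideal `ϖ(L)` of the universal enveloping algebra of a Lie ring `L`,
i.e. the two-sided ideal of `𝒰(L)` generated by the image of the canonical map `ι : L → 𝒰(L)`. -/
noncomputable def aug (L : Type*) [LieRing L] [LieAlgebra ℤ L] :
    Submodule ℤ (UniversalEnvelopingAlgebra ℤ L) :=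
  twoSidedSpan _ (Set.range (ι ℤ : L →ₗ⁅ℤ⁆ UniversalEnvelopingAlgebra ℤ L))

/-- The free Lie ring `F` on `m` generators. -/
abbrev FreeF (m : ℕ) := FreeLieAlgebra ℤ (Fin m)

/-- The generators `X_1, …, X_m` of the free Lie ring `F`. -/
noncomputable def Xgen (m : ℕ) (i : Fin m) : FreeF m := FreeLieAlgebra.of ℤ i

/-- The derived subring `F´ = [F, F]`. -/
noncomputable def derived (m : ℕ) : LieIdeal ℤ (FreeF m) :=
  ⁅(⊤ : LieIdeal ℤ (FreeF m)), (⊤ : LieIdeal ℤ (FreeF m))⁆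

/-- The Lie ideal `T` of `F` generated by the elements `e_i • X_i`. -/
noncomputable def Tideal (m : ℕ) (e : Fin m → ℕ) : LieIdeal ℤ (FreeF m) :=
  LieSubmodule.lieSpan ℤ (FreeF m) {x | ∃ i : Fin m, x = (e i : ℤ) • Xgen m i}

/-- The Lie ideal `S = F´ + T` of `F`. -/
noncomputable def Sideal (m : ℕ) (e : Fin m → ℕ) : LieIdeal ℤ (FreeF m) :=
  derived m ⊔ Tideal m e

/-- The two-sided ideal `𝔰` of `𝒰(F)` generated by `ι(S)`. -/
noncomputable def sId (m : ℕ) (e : Fin m → ℕ) :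
    Submodule ℤ (UniversalEnvelopingAlgebra ℤ (FreeF m)) :=
  twoSidedSpan _ ((ι ℤ : FreeF m →ₗ⁅ℤ⁆ _) '' (Sideal m e : Set (FreeF m)))

/-- `M = {x ∈ F : ι x ∈ ϖ(F)·𝔰}`, as a ℤ-submodule of `F`. -/
noncomputable def Msub (m : ℕ) (e : Fin m → ℕ) : Submodule ℤ (FreeF m) :=
  (aug (FreeF m) * sId m e).comap (ι ℤ : FreeF m →ₗ⁅ℤ⁆ _).toLinearMap

section
variable (m : ℕ)

local notation "U" => UniversalEnvelopingAlgebra ℤ (FreeF m)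
local notation "lcs" => lowerCentralSeries ℤ (FreeF m) (FreeF m)

noncomputable def fmap : FreeF m →ₗ⁅ℤ⁆ Polynomial U :=
  FreeLieAlgebra.lift ℤ fun i => (Polynomial.C ((ι ℤ) (Xgen m i)) * Polynomial.X)

noncomputable def sg : U →ₐ[ℤ] Polynomial U :=
  UniversalEnvelopingAlgebra.lift ℤ (fmap m)

lemma sg_iota (x : FreeF m) : sg m ((ι ℤ) x) = fmap m x :=
  UniversalEnvelopingAlgebra.lift_ι_apply ℤ _ x

lemma fmap_of (i : Fin m) : fmap m (FreeLieAlgebra.of ℤ i) = Polynomial.C ((ι ℤ) (Xgen m i)) * Polynomial.X :=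
  FreeLieAlgebra.lift_of_apply _ i

noncomputable def ev : Polynomial U →ₐ[ℤ] U :=
  Polynomial.eval₂AlgHom (AlgHom.id ℤ U) 1 (fun a => Commute.one_right a)

lemma ev_sg (u : U) : ev m (sg m u) = u := by
  have h : (ev m).comp (sg m) = AlgHom.id ℤ U := by
    have := (UniversalEnvelopingAlgebra.lift ℤ
      (L := FreeF m) (A := U)).symm.injective
    apply this
    rw [UniversalEnvelopingAlgebra.lift_symm_apply, UniversalEnvelopingAlgebra.lift_symm_apply]
    apply FreeLieAlgebra.hom_ext
    intro i
    show ev m (sg m ((ι ℤ) (FreeLieAlgebra.of ℤ i))) = (ι ℤ) (FreeLieAlgebra.of ℤ i)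
    rw [sg_iota, fmap_of, map_mul]
    simp [ev, Xgen]
    erw [Polynomial.eval₂AlgHom_apply, Polynomial.eval₂AlgHom_apply]
    simp
  exact DFunLike.congr_fun h u

lemma lie_mem_lcs : ∀ (i : ℕ) (u : FreeF m), u ∈ lcs i →
    ∀ (j : ℕ) (v : FreeF m), v ∈ lcs j → ⁅u, v⁆ ∈ lcs (i + j + 1) := by
  intro i
  induction i with
  | zero =>
    intro u _ j v hv
    rw [Nat.zero_add, lowerCentralSeries_succ]
    exact LieSubmodule.lie_mem_lie (LieSubmodule.mem_top u) hv
  | succ i ih =>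
    intro u hu j v hv
    rw [lowerCentralSeries_succ] at hu
    have hu' : u ∈ Submodule.span ℤ {y : FreeF m | ∃ x ∈ (⊤ : LieIdeal ℤ (FreeF m)),
        ∃ n ∈ lcs i, ⁅x, n⁆ = y} := by
      rw [← LieSubmodule.lieIdeal_oper_eq_linear_span']
      exact hu
    clear hu
    induction hu' using Submodule.span_induction with
    | mem y hy =>
      obtain ⟨a, -, b, hb, rfl⟩ := hy
      rw [lie_lie]
      apply sub_mem
      · have h1 : ⁅b, v⁆ ∈ lcs (i + j + 1) := ih b hb j v hv
        have h2 : ⁅a, ⁅b, v⁆⁆ ∈ lcs (i + j + 1 + 1) := by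
          rw [lowerCentralSeries_succ]
          exact LieSubmodule.lie_mem_lie (LieSubmodule.mem_top a) h1
        simpa [Nat.add_assoc, Nat.add_comm, Nat.add_left_comm] using h2
      · have h1 : ⁅a, v⁆ ∈ lcs (j + 1) := by
          rw [lowerCentralSeries_succ]
          exact LieSubmodule.lie_mem_lie (LieSubmodule.mem_top a) hv
        have h2 := ih b hb (j + 1) _ h1
        simpa [Nat.add_assoc, Nat.add_comm, Nat.add_left_comm] using h2
    | zero => simp
    | add y z _ _ hy hz => rw [add_lie]; exact add_mem hy hz
    | smul t y _ hy =>
      rw [smul_lie]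
      exact (LieSubmodule.mem_toSubmodule _).mp
        (Submodule.smul_mem _ t ((LieSubmodule.mem_toSubmodule _).mpr hy))

lemma freeF_mem_of_gen (W : LieSubalgebra ℤ (FreeF m))
    (h : ∀ i, FreeLieAlgebra.of ℤ i ∈ W) (x : FreeF m) : x ∈ W := by
  let g : FreeF m →ₗ⁅ℤ⁆ W := FreeLieAlgebra.lift ℤ (fun i => ⟨FreeLieAlgebra.of ℤ i, h i⟩)
  have hcomp : W.incl.comp g = LieHom.id := by
    apply FreeLieAlgebra.hom_ext
    intro i
    simp only [LieHom.coe_comp, Function.comp_apply, LieHom.id_apply, g,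
      FreeLieAlgebra.lift_of_apply]
    erw [LieHom.comp_apply, FreeLieAlgebra.lift_of_apply]
    rfl
  have hx : W.incl (g x) = x := by
    have := LieHom.congr_fun hcomp x
    simpa using this
  rw [← hx]
  exact (g x).2

/-- The degree-`d` homogeneous piece of `ι '' F`. -/
noncomputable def Gsub : ℕ → Submodule ℤ U
  | 0 => ⊥
  | (d + 1) => ((lowerCentralSeries ℤ (FreeF m) (FreeF m) d).toSubmodule).map
      (ι ℤ : FreeF m →ₗ⁅ℤ⁆ U).toLinearMap

lemma commG {i j : ℕ} {a b : U} (ha : a ∈ Gsub m i) (hb : b ∈ Gsub m j) :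
    a * b - b * a ∈ Gsub m (i + j) := by
  match i, j with
  | 0, j => rw [show a = 0 from ha]; simp
  | i + 1, 0 => rw [show b = 0 from hb]; simp
  | i + 1, j + 1 =>
    obtain ⟨u, hu, rfl⟩ := ha
    obtain ⟨v, hv, rfl⟩ := hb
    have h : ⁅u, v⁆ ∈ lcs (i + j + 1) := lie_mem_lcs m i u hu j v hv
    refine ⟨⁅u, v⁆, by simpa [Nat.add_assoc, Nat.add_comm, Nat.add_left_comm] using h, ?_⟩
    show (ι ℤ) ⁅u, v⁆ = _
    rw [LieHom.map_lie]
    exact Ring.lie_def _ _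

/-- Polynomials whose coefficients all lie in `N`. -/
noncomputable def coeffIn (N : Submodule ℤ U) : Submodule ℤ (Polynomial U) where
  carrier := {p | ∀ d, p.coeff d ∈ N}
  add_mem' := by intro p q hp hq d; rw [Polynomial.coeff_add]; exact add_mem (hp d) (hq d)
  zero_mem' := by intro d; simp
  smul_mem' := by
    intro t p hp d
    rw [Polynomial.coeff_smul]
    exact Submodule.smul_mem _ _ (hp d)

lemma mem_coeffIn {N : Submodule ℤ U} {p : Polynomial U} :
    p ∈ coeffIn m N ↔ ∀ d, p.coeff d ∈ N := Iff.rfl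

lemma coeffIn_mono {N N' : Submodule ℤ U} (h : N ≤ N') : coeffIn m N ≤ coeffIn m N' :=
  fun _ hp d => h (hp d)

lemma coeffIn_mul (N N' : Submodule ℤ U) :
    coeffIn m N * coeffIn m N' ≤ coeffIn m (N * N') := by
  rw [Submodule.mul_le]
  intro p hp q hq d
  rw [Polynomial.coeff_mul]
  exact Submodule.sum_mem _ fun c _ => Submodule.mul_mem_mul (hp c.1) (hq c.2)

/-- Polynomials whose coefficients vanish below degree `k`. -/
noncomputable def lowIn (k : ℕ) : Submodule ℤ (Polynomial U) where
  carrier := {p | ∀ d < k, p.coeff d = 0}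
  add_mem' := by intro p q hp hq d hd; rw [Polynomial.coeff_add, hp d hd, hq d hd, add_zero]
  zero_mem' := by intro d _; simp
  smul_mem' := by intro t p hp d hd; rw [Polynomial.coeff_smul, hp d hd, smul_zero]

lemma lowIn_mul (a b : ℕ) : lowIn m a * lowIn m b ≤ lowIn m (a + b) := by
  rw [Submodule.mul_le]
  intro p hp q hq d hd
  rw [Polynomial.coeff_mul]
  apply Finset.sum_eq_zero
  intro c hc
  rw [Finset.HasAntidiagonal.mem_antidiagonal] at hc
  rcases lt_or_ge c.1 a with h | h
  · rw [hp c.1 h, zero_mul]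
  · have : c.2 < b := by omega
    rw [hq c.2 this, mul_zero]

lemma top_mul_lowIn_one : (⊤ : Submodule ℤ (Polynomial U)) * lowIn m 1 ≤ lowIn m 1 := by
  rw [Submodule.mul_le]
  intro p _ q hq d hd
  interval_cases d
  rw [Polynomial.mul_coeff_zero, hq 0 (by norm_num), mul_zero]

lemma lowIn_one_mul_top : lowIn m 1 * (⊤ : Submodule ℤ (Polynomial U)) ≤ lowIn m 1 := by
  rw [Submodule.mul_le]
  intro p hp q _ d hd
  interval_cases d
  rw [Polynomial.mul_coeff_zero, hp 0 (by norm_num), zero_mul]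

/-- The degree-`d` coefficients of `fmap x` are `ι` of homogeneous Lie elements of degree `d`. -/
lemma coeff_fmap_G (x : FreeF m) (d : ℕ) : (fmap m x).coeff d ∈ Gsub m d := by
  let W : LieSubalgebra ℤ (FreeF m) :=
    { carrier := {x | ∀ d, (fmap m x).coeff d ∈ Gsub m d}
      add_mem' := by
        intro x y hx hy d
        rw [map_add, Polynomial.coeff_add]
        exact add_mem (hx d) (hy d)
      zero_mem' := by intro d; simp
      smul_mem' := by
        intro t x hx d
        rw [map_smul, Polynomial.coeff_smul]
        exact Submodule.smul_mem _ _ (hx d)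
      lie_mem' := by
        intro x y hx hy d
        have h : fmap m ⁅x, y⁆ = fmap m x * fmap m y - fmap m y * fmap m x := by
          rw [LieHom.map_lie]; exact Ring.lie_def _ _
        rw [h, Polynomial.coeff_sub, Polynomial.coeff_mul, Polynomial.coeff_mul,
          ← Finset.Nat.sum_antidiagonal_swap
            (f := fun p => ((fmap m) y).coeff p.1 * ((fmap m) x).coeff p.2),
          ← Finset.sum_sub_distrib]
        apply Submodule.sum_mem
        intro c hc
        rw [Finset.HasAntidiagonal.mem_antidiagonal] at hc
        rw [← hc]
        simpa using commG m (hx c.1) (hy c.2) }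
  have hgen : ∀ i, FreeLieAlgebra.of ℤ i ∈ W := by
    intro i d
    show ((fmap m) (FreeLieAlgebra.of ℤ i)).coeff d ∈ Gsub m d
    rw [fmap_of, Polynomial.C_mul_X_eq_monomial, Polynomial.coeff_monomial]
    rcases eq_or_ne 1 d with h | h
    · subst h
      rw [if_pos rfl]
      exact ⟨Xgen m i, LieSubmodule.mem_top _, rfl⟩
    · rw [if_neg h]
      cases d with
      | zero => simp [Gsub]
      | succ d => exact Submodule.zero_mem _
  exact freeF_mem_of_gen m W hgen x d

lemma mem_sandwich {V : Type*} [Ring V] [Algebra ℤ V] {K : Submodule ℤ V} {a : V}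
    (ha : a ∈ K) : a ∈ (⊤ : Submodule ℤ V) * K * (⊤ : Submodule ℤ V) := by
  have h1 : (1 : V) * a * 1 ∈ (⊤ : Submodule ℤ V) * K * (⊤ : Submodule ℤ V) :=
    Submodule.mul_mem_mul (Submodule.mul_mem_mul Submodule.mem_top ha) Submodule.mem_top
  simpa using h1

variable (e : Fin m → ℕ)

local notation "Sspan" => Submodule.span ℤ
  ((ι ℤ : FreeF m →ₗ⁅ℤ⁆ UniversalEnvelopingAlgebra ℤ (FreeF m)) '' (Sideal m e : Set (FreeF m)))

lemma commG_S {i j : ℕ} {a b : UniversalEnvelopingAlgebra ℤ (FreeF m)}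
    (ha : a ∈ Gsub m i) (hb : b ∈ Gsub m j) : a * b - b * a ∈ Sspan := by
  match i, j with
  | 0, j => rw [show a = 0 from ha]; simp
  | i + 1, 0 => rw [show b = 0 from hb]; simp
  | i + 1, j + 1 =>
    obtain ⟨u, -, rfl⟩ := ha
    obtain ⟨v, -, rfl⟩ := hb
    have hmem : ⁅u, v⁆ ∈ Sideal m e := by
      apply (le_sup_left : derived m ≤ Sideal m e)
      exact LieSubmodule.lie_mem_lie (LieSubmodule.mem_top u) (LieSubmodule.mem_top v)
    have : (ι ℤ : FreeF m →ₗ⁅ℤ⁆ UniversalEnvelopingAlgebra ℤ (FreeF m)) ⁅u, v⁆ = (ι ℤ) u * (ι ℤ) v - (ι ℤ) v * (ι ℤ) u := by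
      rw [LieHom.map_lie]; exact Ring.lie_def _ _
    have hspan : (ι ℤ : FreeF m →ₗ⁅ℤ⁆ UniversalEnvelopingAlgebra ℤ (FreeF m)) ⁅u, v⁆ ∈ Sspan :=
      Submodule.subset_span ⟨⁅u, v⁆, hmem, rfl⟩
    rw [this] at hspan
    exact hspan

lemma comm_span_S {i : ℕ} {a b : UniversalEnvelopingAlgebra ℤ (FreeF m)}
    (ha : a ∈ Gsub m i) (hb : b ∈ Sspan) : a * b - b * a ∈ Sspan := by
  induction hb using Submodule.span_induction with
  | mem y hy =>
    obtain ⟨s, hs, rfl⟩ := hy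
    match i with
    | 0 => rw [show a = 0 from ha]; simp
    | i + 1 =>
      obtain ⟨u, -, rfl⟩ := ha
      have hmem : ⁅u, s⁆ ∈ Sideal m e := (Sideal m e).lie_mem hs
      have : (ι ℤ : FreeF m →ₗ⁅ℤ⁆ UniversalEnvelopingAlgebra ℤ (FreeF m)) ⁅u, s⁆ = (ι ℤ) u * (ι ℤ) s - (ι ℤ) s * (ι ℤ) u := by
        rw [LieHom.map_lie]; exact Ring.lie_def _ _
      have hspan : (ι ℤ : FreeF m →ₗ⁅ℤ⁆ UniversalEnvelopingAlgebra ℤ (FreeF m)) ⁅u, s⁆ ∈ Sspan :=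
        Submodule.subset_span ⟨⁅u, s⁆, hmem, rfl⟩
      rw [this] at hspan
      exact hspan
  | zero => simp
  | add y z _ _ hy hz =>
    have : a * (y + z) - (y + z) * a = (a * y - y * a) + (a * z - z * a) := by noncomm_ring
    rw [this]; exact add_mem hy hz
  | smul t y _ hy =>
    have : a * (t • y) - (t • y) * a = t • (a * y - y * a) := by
      rw [mul_smul_comm, smul_mul_assoc, ← smul_sub]
    rw [this]; exact Submodule.smul_mem _ _ hy

lemma coeff_fmap_S {s : FreeF m} (hs : s ∈ Sideal m e) (d : ℕ) :
    (fmap m s).coeff d ∈ Sspan := by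
  rw [Sideal] at hs
  rw [LieSubmodule.mem_sup] at hs
  obtain ⟨a, ha, b, hb, rfl⟩ := hs
  rw [map_add, Polynomial.coeff_add]
  apply add_mem
  · -- a ∈ derived m
    have hle : (derived m).toSubmodule ≤
        (coeffIn m Sspan).comap (fmap m).toLinearMap := by
      rw [derived, LieSubmodule.lieIdeal_oper_eq_linear_span']
      rw [Submodule.span_le]
      rintro _ ⟨x, -, y, -, rfl⟩
      intro d
      have h : fmap m ⁅x, y⁆ = fmap m x * fmap m y - fmap m y * fmap m x := by
        rw [LieHom.map_lie]; exact Ring.lie_def _ _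
      rw [LieHom.coe_toLinearMap, h, Polynomial.coeff_sub, Polynomial.coeff_mul,
        Polynomial.coeff_mul,
        ← Finset.Nat.sum_antidiagonal_swap
          (f := fun p => ((fmap m) y).coeff p.1 * ((fmap m) x).coeff p.2),
        ← Finset.sum_sub_distrib]
      apply Submodule.sum_mem
      intro c hc
      simpa using commG_S m e (coeff_fmap_G m x c.1) (coeff_fmap_G m y c.2)
    exact hle ha d
  · -- b ∈ Tideal m e
    let Q : LieSubmodule ℤ (FreeF m) (FreeF m) :=
      { carrier := {x | ∀ d, (fmap m x).coeff d ∈ Sspan}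
        add_mem' := by
          intro x y hx hy d
          rw [map_add, Polynomial.coeff_add]
          exact add_mem (hx d) (hy d)
        zero_mem' := by intro d; simp
        smul_mem' := by
          intro t x hx d
          rw [map_smul, Polynomial.coeff_smul]
          exact Submodule.smul_mem _ _ (hx d)
        lie_mem := by
          intro x q hq d
          have h : fmap m ⁅x, q⁆ = fmap m x * fmap m q - fmap m q * fmap m x := by
            rw [LieHom.map_lie]; exact Ring.lie_def _ _
          rw [h, Polynomial.coeff_sub, Polynomial.coeff_mul, Polynomial.coeff_mul,
            ← Finset.Nat.sum_antidiagonal_swap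
              (f := fun p => ((fmap m) q).coeff p.1 * ((fmap m) x).coeff p.2),
            ← Finset.sum_sub_distrib]
          apply Submodule.sum_mem
          intro c hc
          simpa using comm_span_S m e (coeff_fmap_G m x c.1) (hq c.2) }
    have hle : Tideal m e ≤ Q := by
      rw [Tideal, LieSubmodule.lieSpan_le]
      rintro _ ⟨i, rfl⟩
      intro d
      show (fmap m ((e i : ℤ) • Xgen m i)).coeff d ∈ Sspan
      rw [map_smul, Polynomial.coeff_smul]
      show (e i : ℤ) • ((fmap m) (FreeLieAlgebra.of ℤ i)).coeff d ∈ Sspan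
      rw [fmap_of, Polynomial.C_mul_X_eq_monomial, Polynomial.coeff_monomial]
      rcases eq_or_ne 1 d with h | h
      · rw [if_pos h]
        have hmem : (e i : ℤ) • Xgen m i ∈ Sideal m e := by
          apply (le_sup_right : Tideal m e ≤ Sideal m e)
          exact LieSubmodule.subset_lieSpan ⟨i, rfl⟩
        have : (ι ℤ : FreeF m →ₗ⁅ℤ⁆ UniversalEnvelopingAlgebra ℤ (FreeF m)) ((e i : ℤ) • Xgen m i) = (e i : ℤ) • (ι ℤ) (Xgen m i) :=
          map_smul _ _ _
        rw [← this]
        exact Submodule.subset_span ⟨_, hmem, rfl⟩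
      · rw [if_neg h]; simp
    exact hle hb d

local notation "ISpan" => Submodule.span ℤ
  (Set.range (ι ℤ : FreeF m →ₗ⁅ℤ⁆ UniversalEnvelopingAlgebra ℤ (FreeF m)))

lemma Gsub_le_iotaSpan (d : ℕ) : Gsub m d ≤ ISpan := by
  cases d with
  | zero => exact bot_le
  | succ d =>
    rintro _ ⟨u, -, rfl⟩
    exact Submodule.subset_span ⟨u, rfl⟩

lemma map_sg_iotaSpan_coeff :
    Submodule.map (sg m).toLinearMap ISpan ≤ coeffIn m ISpan := by
  erw [Submodule.map_span, Submodule.span_le]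
  rintro _ ⟨_, ⟨x, rfl⟩, rfl⟩
  intro d
  show ((sg m) ((ι ℤ) x)).coeff d ∈ ISpan
  rw [sg_iota]
  exact Gsub_le_iotaSpan m d (coeff_fmap_G m x d)

lemma map_sg_iotaSpan_low :
    Submodule.map (sg m).toLinearMap ISpan ≤ lowIn m 1 := by
  erw [Submodule.map_span, Submodule.span_le]
  rintro _ ⟨_, ⟨x, rfl⟩, rfl⟩
  intro d hd
  interval_cases d
  show ((sg m) ((ι ℤ) x)).coeff 0 = 0
  rw [sg_iota]
  have := coeff_fmap_G m x 0
  simpa [Gsub] using this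

lemma map_sg_top : Submodule.map (sg m).toLinearMap ⊤ ≤ coeffIn m ⊤ :=
  fun p _ => fun _ => Submodule.mem_top

lemma map_sg_twoSided {K N : Submodule ℤ (UniversalEnvelopingAlgebra ℤ (FreeF m))}
    (h : Submodule.map (sg m).toLinearMap K ≤ coeffIn m N) :
    Submodule.map (sg m).toLinearMap ((⊤ * K * ⊤ : Submodule ℤ U)) ≤ coeffIn m (⊤ * N * ⊤) := by
  erw [Submodule.map_mul, Submodule.map_mul]
  refine le_trans (mul_le_mul'
    (mul_le_mul' (map_sg_top m) h) (map_sg_top m)) ?_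
  refine le_trans (mul_le_mul' (coeffIn_mul m ⊤ N) le_rfl) ?_
  exact coeffIn_mul m (⊤ * N) ⊤

lemma map_sg_aug_coeff :
    Submodule.map (sg m).toLinearMap (aug (FreeF m)) ≤ coeffIn m (aug (FreeF m)) :=
  map_sg_twoSided m (map_sg_iotaSpan_coeff m)

lemma map_sg_aug_low :
    Submodule.map (sg m).toLinearMap (aug (FreeF m)) ≤ lowIn m 1 := by
  show Submodule.map (sg m).toLinearMap ((⊤ * ISpan * ⊤ : Submodule ℤ U)) ≤ lowIn m 1
  erw [Submodule.map_mul, Submodule.map_mul]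
  refine le_trans (mul_le_mul' (mul_le_mul' le_top
    (map_sg_iotaSpan_low m)) le_top) ?_
  refine le_trans (mul_le_mul' (top_mul_lowIn_one m) le_rfl) ?_
  exact lowIn_one_mul_top m

lemma map_sg_aug_pow (n : ℕ) :
    Submodule.map (sg m).toLinearMap ((aug (FreeF m)) ^ n) ≤ lowIn m n := by
  erw [Submodule.map_pow]
  induction n with
  | zero => intro p _ d hd; omega
  | succ k ih =>
    rw [pow_succ]
    exact le_trans (mul_le_mul' ih (map_sg_aug_low m)) (lowIn_mul m k 1)

lemma map_sg_s :
    Submodule.map (sg m).toLinearMap (sId m e) ≤ coeffIn m (sId m e) := by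
  apply map_sg_twoSided
  erw [Submodule.map_span, Submodule.span_le]
  rintro _ ⟨_, ⟨x, hx, rfl⟩, rfl⟩
  intro d
  show ((sg m) ((ι ℤ) x)).coeff d ∈ _
  rw [sg_iota]
  exact coeff_fmap_S m e hx d

lemma map_sg_augs :
    Submodule.map (sg m).toLinearMap (aug (FreeF m) * sId m e)
      ≤ coeffIn m (aug (FreeF m) * sId m e) := by
  erw [Submodule.map_mul]
  exact le_trans (mul_le_mul' (map_sg_aug_coeff m) (map_sg_s m e))
    (coeffIn_mul m _ _)

lemma iota_lcs_mem_pow : ∀ (k : ℕ) (x : FreeF m), x ∈ lcs k →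
    (ι ℤ : FreeF m →ₗ⁅ℤ⁆ UniversalEnvelopingAlgebra ℤ (FreeF m)) x ∈ (aug (FreeF m)) ^ (k + 1) := by
  intro k
  induction k with
  | zero =>
    intro x _
    rw [Nat.zero_add, Submodule.pow_one]
    exact mem_sandwich (Submodule.subset_span ⟨x, rfl⟩)
  | succ k ih =>
    intro x hx
    rw [LieModule.lowerCentralSeries_succ] at hx
    have hx' : x ∈ Submodule.span ℤ {y : FreeF m | ∃ a ∈ (⊤ : LieIdeal ℤ (FreeF m)),
        ∃ b ∈ lcs k, ⁅a, b⁆ = y} := by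
      rw [← LieSubmodule.lieIdeal_oper_eq_linear_span']
      exact hx
    clear hx
    induction hx' using Submodule.span_induction with
    | mem y hy =>
      obtain ⟨a, -, b, hb, rfl⟩ := hy
      have h : (ι ℤ : FreeF m →ₗ⁅ℤ⁆ UniversalEnvelopingAlgebra ℤ (FreeF m)) ⁅a, b⁆
          = (ι ℤ) a * (ι ℤ) b - (ι ℤ) b * (ι ℤ) a := by
        rw [LieHom.map_lie]; exact Ring.lie_def _ _
      rw [h]
      have ha1 : (ι ℤ : FreeF m →ₗ⁅ℤ⁆ UniversalEnvelopingAlgebra ℤ (FreeF m)) a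
          ∈ aug (FreeF m) := mem_sandwich (Submodule.subset_span ⟨a, rfl⟩)
      have hb1 := ih b hb
      apply sub_mem
      · have := Submodule.mul_mem_mul ha1 hb1
        rw [Submodule.pow_succ' (M := aug (FreeF m)) (n := k + 1) (Nat.succ_ne_zero k)]; exact this
      · have := Submodule.mul_mem_mul hb1 ha1
        rwa [← Submodule.pow_succ] at this
    | zero => simp
    | add y z _ _ hy hz => rw [map_add]; exact add_mem hy hz
    | smul t y _ hy => rw [map_smul]; exact Submodule.smul_mem _ _ hy

lemma ev_eq_sum (q : Polynomial (UniversalEnvelopingAlgebra ℤ (FreeF m))) :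
    ev m q = ∑ d ∈ q.support, q.coeff d := by
  show Polynomial.eval₂ _ 1 q = _
  rw [Polynomial.eval₂_eq_sum, Polynomial.sum]
  simp

end

/-- For all `n ≥ 1`, the set `{x ∈ F : ι x ∈ ϖ(F)^n + ϖ(F)·𝔰}` equals `γ_n(F) + M`,
where `γ_n(F) = lowerCentralSeries ℤ F F (n-1)` is the `n`-th term of the lower central
series of `F`. -/
theorem comap_pow_sup_eq_gamma_sup_M (m : ℕ) (e : Fin m → ℕ)
    (hdvd : ∀ i : Fin m, ∀ h : (i : ℕ) + 1 < m, e i ∣ e ⟨(i : ℕ) + 1, h⟩)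
    (n : ℕ) (hn : 1 ≤ n) :
    ((aug (FreeF m)) ^ n ⊔ aug (FreeF m) * sId m e).comap
        (ι ℤ : FreeF m →ₗ⁅ℤ⁆ _).toLinearMap
      = (lowerCentralSeries ℤ (FreeF m) (FreeF m) (n - 1)).toSubmodule ⊔ Msub m e := by
  apply le_antisymm
  · intro x hx
    erw [Submodule.mem_comap, Submodule.mem_sup] at hx
    obtain ⟨w, hw, v, hv, heq'⟩ := hx
    have heq : w + v = (ι ℤ : FreeF m →ₗ⁅ℤ⁆ _) x := heq'
    have hchoice : ∀ d : ℕ, ∃ y : FreeF m,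
        (ι ℤ : FreeF m →ₗ⁅ℤ⁆ _) y = ((sg m) ((ι ℤ) x)).coeff d ∧
        (d < n → y ∈ Msub m e) ∧
        (n ≤ d → y ∈ lowerCentralSeries ℤ (FreeF m) (FreeF m) (n - 1)) := by
      intro d
      have hG : ((sg m) ((ι ℤ) x)).coeff d ∈ Gsub m d := by
        rw [sg_iota]; exact coeff_fmap_G m x d
      match d with
      | 0 =>
        refine ⟨0, ?_, fun _ => Submodule.zero_mem _, fun _ => LieSubmodule.zero_mem _⟩
        have : ((sg m) ((ι ℤ) x)).coeff 0 = 0 := by simpa [Gsub] using hG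
        simpa using this.symm
      | d + 1 =>
        obtain ⟨u, hu, hiu⟩ := hG
        refine ⟨u, hiu, ?_, ?_⟩
        · intro hlt
          erw [Msub, Submodule.mem_comap]
          show (ι ℤ : FreeF m →ₗ⁅ℤ⁆ _) u ∈ _
          have : (ι ℤ : FreeF m →ₗ⁅ℤ⁆ _) u = ((sg m) ((ι ℤ) x)).coeff (d + 1) := hiu
          rw [this, ← heq, map_add, Polynomial.coeff_add]
          have h1 : ((sg m) w).coeff (d + 1) = 0 :=
            map_sg_aug_pow m n ⟨w, hw, rfl⟩ (d + 1) hlt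
          have h2 : ((sg m) v).coeff (d + 1) ∈ aug (FreeF m) * sId m e :=
            map_sg_augs m e ⟨v, hv, rfl⟩ (d + 1)
          rw [h1, zero_add]
          exact h2
        · intro hle
          exact antitone_lowerCentralSeries ℤ (FreeF m) (FreeF m) (by omega : n - 1 ≤ d) hu
    choose y hy1 hy2 hy3 using hchoice
    have hz : (ι ℤ : FreeF m →ₗ⁅ℤ⁆ _) (∑ d ∈ ((sg m) ((ι ℤ) x)).support, y d)
        = (ι ℤ) x := by
      show (ι ℤ : FreeF m →ₗ⁅ℤ⁆ _).toLinearMap (∑ d ∈ ((sg m) ((ι ℤ) x)).support, y d)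
          = (ι ℤ) x
      rw [map_sum]
      have : ∀ d ∈ ((sg m) ((ι ℤ) x)).support,
          (ι ℤ : FreeF m →ₗ⁅ℤ⁆ _).toLinearMap (y d) = ((sg m) ((ι ℤ) x)).coeff d :=
        fun d _ => hy1 d
      rw [Finset.sum_congr rfl this, ← ev_eq_sum, ev_sg]
    set s := ((sg m) ((ι ℤ) x)).support with hs
    rw [Submodule.mem_sup]
    refine ⟨∑ d ∈ s.filter (fun d => n ≤ d), y d, ?_,
      (∑ d ∈ s.filter (fun d => ¬ n ≤ d), y d) + (x - ∑ d ∈ s, y d), ?_, ?_⟩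
    · apply Submodule.sum_mem
      intro d hd
      rw [Finset.mem_filter] at hd
      exact hy3 d hd.2
    · apply Submodule.add_mem
      · apply Submodule.sum_mem
        intro d hd
        rw [Finset.mem_filter] at hd
        exact hy2 d (by omega)
      · erw [Msub, Submodule.mem_comap, LieHom.coe_toLinearMap, map_sub, hz, sub_self]
        exact Submodule.zero_mem _
    · have hsplit := Finset.sum_filter_add_sum_filter_not s (fun d => n ≤ d) y
      rw [← hsplit]
      abel
  · apply sup_le
    · intro x hx
      erw [Submodule.mem_comap]
      apply Submodule.mem_sup_left
      have := iota_lcs_mem_pow m (n - 1) x hx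
      rwa [show n - 1 + 1 = n by omega] at this
    · intro x hx
      erw [Submodule.mem_comap]
      exact Submodule.mem_sup_right hx
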